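/- For s ∈ ℕ, the identity of formal power series (1 - q²) / Π_{a,b ∈ {1,-1}} (1 - u^a v^b q) = Σ_{k=0}^∞ χ_k(u) χ_k(v) q^k holds, where χ_k(u) = u^k + u^{k-2} + ⋯ + u^{-k}. -/

import Mathlib

/-- The SL₂ character `χ_k(u) = u^k + u^{k-2} + ⋯ + u^{-k}`, for a unit `u`
in a commutative ring. -/
def chi {R : Type*} [CommRing R] (u : Rˣ) (k : ℕ) : R :=
  ∑ j ∈ Finset.range (k + 1), (u : R) ^ (k - j) * ((↑(u⁻¹) : R)) ^ j

lemma chi_zero {R : Type*} [CommRing R] (u : Rˣ) : chi u 0 = 1 := by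
  simp [chi]

lemma chi_one {R : Type*} [CommRing R] (u : Rˣ) :
    chi u 1 = (u : R) + (↑(u⁻¹) : R) := by
  simp [chi, Finset.sum_range_succ]

lemma chi_succ {R : Type*} [CommRing R] (u : Rˣ) (n : ℕ) :
    chi u (n + 1) = (u : R) ^ (n + 1) + (↑(u⁻¹) : R) * chi u n := by
  rw [chi, Finset.sum_range_succ', chi, Finset.mul_sum]
  simp only [Nat.add_sub_add_right, Nat.sub_zero, pow_zero, mul_one]
  rw [add_comm]
  congr 1
  exact Finset.sum_congr rfl fun j _ => by ring

lemma chi_rec {R : Type*} [CommRing R] (u : Rˣ) (n : ℕ) :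
    chi u (n + 2) = ((u : R) + (↑(u⁻¹) : R)) * chi u (n + 1) - chi u n := by
  have hu : (u : R) * (↑(u⁻¹) : R) = 1 := u.mul_inv
  have h1 : chi u (n + 2) = (u : R) ^ (n + 2) + (↑(u⁻¹) : R) * chi u (n + 1) :=
    chi_succ u (n + 1)
  have h2 : chi u (n + 1) = (u : R) ^ (n + 1) + (↑(u⁻¹) : R) * chi u n :=
    chi_succ u n
  linear_combination h1 - (u : R) * h2 - chi u n * hu

lemma chi_key {R : Type*} [CommRing R] (u v : Rˣ) (m : ℕ) :
    chi u (m + 4) * chi v (m + 4)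
      - (((u : R) + ↑(u⁻¹)) * ((v : R) + ↑(v⁻¹))) * (chi u (m + 3) * chi v (m + 3))
      + (((u : R) + ↑(u⁻¹)) ^ 2 + ((v : R) + ↑(v⁻¹)) ^ 2 - 2) * (chi u (m + 2) * chi v (m + 2))
      - (((u : R) + ↑(u⁻¹)) * ((v : R) + ↑(v⁻¹))) * (chi u (m + 1) * chi v (m + 1))
      + chi u m * chi v m = 0 := by
  have h4u : chi u (m + 4) = ((u : R) + ↑(u⁻¹)) * chi u (m + 3) - chi u (m + 2) :=
    chi_rec u (m + 2)
  have h3u : chi u (m + 3) = ((u : R) + ↑(u⁻¹)) * chi u (m + 2) - chi u (m + 1) :=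
    chi_rec u (m + 1)
  have h2u : chi u (m + 2) = ((u : R) + ↑(u⁻¹)) * chi u (m + 1) - chi u m :=
    chi_rec u m
  have h4v : chi v (m + 4) = ((v : R) + ↑(v⁻¹)) * chi v (m + 3) - chi v (m + 2) :=
    chi_rec v (m + 2)
  have h3v : chi v (m + 3) = ((v : R) + ↑(v⁻¹)) * chi v (m + 2) - chi v (m + 1) :=
    chi_rec v (m + 1)
  have h2v : chi v (m + 2) = ((v : R) + ↑(v⁻¹)) * chi v (m + 1) - chi v m :=
    chi_rec v m
  rw [h4u, h4v, h3u, h3v, h2u, h2v]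
  ring

open PowerSeries in
/-- The formal power series identity
`(1 - q²) / Π_{a,b ∈ {1,-1}} (1 - u^a v^b q) = Σ_{k=0}^∞ χ_k(u) χ_k(v) q^k`,
stated with denominators cleared. -/
theorem powerSeries_chi_identity {R : Type*} [CommRing R] (u v : Rˣ) :
    (PowerSeries.mk fun k => chi u k * chi v k) *
        ((1 - C ((u : R) * (v : R)) * X) * (1 - C ((u : R) * (↑(v⁻¹) : R)) * X) *
          (1 - C ((↑(u⁻¹) : R) * (v : R)) * X) *
          (1 - C ((↑(u⁻¹) : R) * (↑(v⁻¹) : R)) * X)) =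
      1 - X ^ 2 := by
  have hu : (u : R) * (↑(u⁻¹) : R) = 1 := u.mul_inv
  have hv : (v : R) * (↑(v⁻¹) : R) = 1 := v.mul_inv
  set a : R := (u : R) with ha
  set a' : R := (↑(u⁻¹) : R) with ha'
  set b : R := (v : R) with hb
  set b' : R := (↑(v⁻¹) : R) with hb'
  set e1 : R := (a + a') * (b + b') with he1
  set e2 : R := (a + a') ^ 2 + (b + b') ^ 2 - 2 with he2
  have hCu : (C a) * (C a') = 1 := by rw [← map_mul, hu, map_one]
  have hCv : (C b) * (C b') = 1 := by rw [← map_mul, hv, map_one]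
  have hD : ((1 - C (a * b) * X) * (1 - C (a * b') * X) *
          (1 - C (a' * b) * X) * (1 - C (a' * b') * X)) =
      1 - C e1 * X + C e2 * X ^ 2 - C e1 * X ^ 3 + X ^ 4 := by
    rw [he1, he2]
    simp only [map_mul, map_add, map_sub, map_pow, map_one, map_ofNat]
    linear_combination
      (X ^ 2 * ((C b + C b') ^ 2 - 2)
        - X ^ 3 * (C a + C a') * (C b + C b') * (C b * C b')
        + X ^ 4 * (C b) ^ 2 * (C b') ^ 2 * (1 + C a * C a')) * hCu +
      (X ^ 2 * ((C a) ^ 2 + (C a') ^ 2)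
        - X ^ 3 * (C a + C a') * (C b + C b')
        + X ^ 4 * (1 + C b * C b')) * hCv
  rw [hD]
  have hsplit : (PowerSeries.mk fun k => chi u k * chi v k) *
      (1 - C e1 * X + C e2 * X ^ 2 - C e1 * X ^ 3 + X ^ 4) =
      (PowerSeries.mk fun k => chi u k * chi v k)
        - C e1 * ((PowerSeries.mk fun k => chi u k * chi v k) * X ^ 1)
        + C e2 * ((PowerSeries.mk fun k => chi u k * chi v k) * X ^ 2)
        - C e1 * ((PowerSeries.mk fun k => chi u k * chi v k) * X ^ 3)
        + (PowerSeries.mk fun k => chi u k * chi v k) * X ^ 4 := by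
    ring
  rw [hsplit]
  ext n
  simp only [map_add, map_sub, PowerSeries.coeff_C_mul, PowerSeries.coeff_mul_X_pow',
    PowerSeries.coeff_mk, PowerSeries.coeff_one, PowerSeries.coeff_X_pow]
  match n with
  | 0 => norm_num [chi_zero]
  | 1 =>
    norm_num [chi_zero, chi_one, he1]
    exact sub_self _
  | 2 =>
    have h2u : chi u 2 = (a + a') * chi u 1 - chi u 0 := chi_rec u 0
    have h2v : chi v 2 = (b + b') * chi v 1 - chi v 0 := chi_rec v 0
    norm_num [h2u, h2v, chi_zero, chi_one, he1, he2]
    ring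
  | 3 =>
    have h2u : chi u 2 = (a + a') * chi u 1 - chi u 0 := chi_rec u 0
    have h2v : chi v 2 = (b + b') * chi v 1 - chi v 0 := chi_rec v 0
    have h3u : chi u 3 = (a + a') * chi u 2 - chi u 1 := chi_rec u 1
    have h3v : chi v 3 = (b + b') * chi v 2 - chi v 1 := chi_rec v 1
    norm_num [h3u, h3v, h2u, h2v, chi_zero, chi_one, he1, he2]
    ring
  | (m + 4) =>
    have key := chi_key u v m
    have e1' : m + 4 - 1 = m + 3 := rfl
    have e2' : m + 4 - 2 = m + 2 := rfl
    have e3' : m + 4 - 3 = m + 1 := rfl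
    have e4' : m + 4 - 4 = m := rfl
    simp only [show 1 ≤ m + 4 by omega, show 2 ≤ m + 4 by omega, show 3 ≤ m + 4 by omega,
      show 4 ≤ m + 4 by omega, if_true, e1', e2', e3', e4',
      show ¬(m + 4 = 0) by omega, show ¬(m + 4 = 2) by omega, if_false]
    linear_combination key
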